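/- Let P be a finite poset without isolated points and let C ⊆ E(P) be a 4-crown with edges a<v, a<w, b<v, b<w. Suppose that for each of the four edges (x,y) of C there exists an improper 4-crown in E(P) containing both x and y, and suppose that any two 4-crown bundles of P intersect both in a minimal point of P and in a maximal point of P (i.e., the bundle graph is complete in both edge types). Then C is not a retract of P. -/

import Mathlib

open Set

/-- Minimal points of a poset. -/
def LSet (α : Type*) [PartialOrder α] : Set α := {x | ∀ y, y ≤ x → y = x}

/-- Maximal points of a poset. -/
def USet (α : Type*) [PartialOrder α] : Set α := {x | ∀ y, x ≤ y → y = x}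

/-- Extremal points. -/
def ESet (α : Type*) [PartialOrder α] : Set α := LSet α ∪ USet α

/-- Non-extremal (interior) points. -/
def MSet (α : Type*) [PartialOrder α] : Set α := (ESet α)ᶜ

/-- No isolated points: every point is comparable to some other point. -/
def NoIsolated (α : Type*) [PartialOrder α] : Prop := ∀ x : α, ∃ y : α, x < y ∨ y < x

/-- Height one: every point is extremal and some strict comparability exists. -/
def HeightOne (α : Type*) [PartialOrder α] : Prop :=
  (∀ x : α, x ∈ ESet α) ∧ ∃ x y : α, x < y

/-- A 4-crown with minimal points a, b and maximal points v, w: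
the comparabilities are exactly a<v, a<w, b<v, b<w. -/
def IsCrown {α : Type*} [PartialOrder α] (a b v w : α) : Prop :=
  a < v ∧ a < w ∧ b < v ∧ b < w ∧ ¬ a ≤ b ∧ ¬ b ≤ a ∧ ¬ v ≤ w ∧ ¬ w ≤ v

/-- The inner of a 4-crown: [a,v] ∩ [b,w]. -/
def crownInner {α : Type*} [PartialOrder α] (a b v w : α) : Set α :=
  {m | a ≤ m ∧ m ≤ v} ∩ {m | b ≤ m ∧ m ≤ w}

/-- An improper 4-crown contained in the extremal points E(P). -/
def IsImproperCrownE {α : Type*} [PartialOrder α] (a b v w : α) : Prop :=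
  IsCrown a b v w ∧ a ∈ ESet α ∧ b ∈ ESet α ∧ v ∈ ESet α ∧ w ∈ ESet α ∧
    (crownInner a b v w).Nonempty

/-- Inner points of improper 4-crowns contained in E(P). -/
def innerPts (α : Type*) [PartialOrder α] : Set α :=
  {m | ∃ a b v w : α, IsImproperCrownE a b v w ∧ m ∈ crownInner a b v w}

/-- Ξ(m): union of all improper 4-crowns with inner point m. -/
def Xi {α : Type*} [PartialOrder α] (m : α) : Set α :=
  (LSet α ∩ {x | x ≤ m}) ∪ (USet α ∩ {x | m ≤ x})

/-- 4-crown bundles: maximal sets Ξ(m) with respect to inclusion. -/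
def bundles (α : Type*) [PartialOrder α] : Set (Set α) :=
  {F | ∃ m ∈ innerPts α, F = Xi m ∧
    ∀ m' ∈ innerPts α, Xi m ⊆ Xi m' → Xi m' = Xi m}

/-- R is a retract of the poset on α. -/
def IsRetract (α : Type*) [PartialOrder α] (R : Set α) : Prop :=
  ∃ r : α → α, Monotone r ∧ (∀ x, r (r x) = r x) ∧ Set.range r = R

/-- C is a retract of the induced subposet on Y. -/
def IsRetractIn {α : Type*} [PartialOrder α] (Y C : Set α) : Prop :=
  ∃ r : Y → Y, Monotone r ∧ (∀ x, r (r x) = r x) ∧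
    Set.range r = {y : Y | (y : α) ∈ C}

/-- The comparability graph of the poset is connected. -/
def PosetConnected (α : Type*) [PartialOrder α] : Prop :=
  ∀ x y : α, Relation.ReflTransGen (fun u v => u ≤ v ∨ v ≤ u) x y

/-- Minimal points of an induced subposet. -/
def minIn {α : Type*} [PartialOrder α] (S : Set α) : Set α :=
  {x ∈ S | ∀ y ∈ S, y ≤ x → y = x}

/-- Maximal points of an induced subposet. -/
def maxIn {α : Type*} [PartialOrder α] (S : Set α) : Set α :=
  {x ∈ S | ∀ y ∈ S, x ≤ y → y = x}

section Aux

variable {α : Type*} [PartialOrder α]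

lemma notUSet_of_lt {x y : α} (h : x < y) : x ∉ USet α :=
  fun hx => absurd (hx y h.le) h.ne'

lemma notLSet_of_lt {x y : α} (h : x < y) : y ∉ LSet α :=
  fun hy => absurd (hy x h.le) h.ne

lemma le_of_mem_Xi_LSet (hiso : NoIsolated α) {x m : α}
    (hx : x ∈ LSet α) (hxm : x ∈ Xi m) : x ≤ m := by
  rcases hxm with h | h
  · exact h.2
  · obtain ⟨y, hy | hy⟩ := hiso x
    · exact absurd (h.1 y hy.le) hy.ne'
    · exact absurd (hx y hy.le) hy.ne

lemma ge_of_mem_Xi_USet (hiso : NoIsolated α) {x m : α}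
    (hx : x ∈ USet α) (hxm : x ∈ Xi m) : m ≤ x := by
  rcases hxm with h | h
  · obtain ⟨y, hy | hy⟩ := hiso x
    · exact absurd (hx y hy.le) hy.ne'
    · exact absurd (h.1 y hy.le) hy.ne
  · exact h.2

lemma edge_inner {x y : α} (hx : x ∈ LSet α) (hy : y ∈ USet α)
    (h : ∃ a2 b2 v2 w2 : α, IsImproperCrownE a2 b2 v2 w2 ∧
        x ∈ ({a2, b2, v2, w2} : Set α) ∧ y ∈ ({a2, b2, v2, w2} : Set α)) :
    ∃ m ∈ innerPts α, x ≤ m ∧ m ≤ y := by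
  obtain ⟨a2, b2, v2, w2, himp, hxm, hym⟩ := h
  obtain ⟨m, hm⟩ := himp.2.2.2.2.2
  have hc := himp.1
  have hxle : x ≤ m := by
    rcases hxm with rfl | rfl | rfl | rfl
    · exact hm.1.1
    · exact hm.2.1
    · exact absurd hx (notLSet_of_lt hc.1)
    · exact absurd hx (notLSet_of_lt hc.2.1)
  have hyle : m ≤ y := by
    rcases hym with rfl | rfl | rfl | rfl
    · exact absurd hy (notUSet_of_lt hc.1)
    · exact absurd hy (notUSet_of_lt hc.2.2.1)
    · exact hm.1.2
    · exact hm.2.2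
  exact ⟨m, ⟨a2, b2, v2, w2, himp, hm⟩, hxle, hyle⟩

lemma exists_bundle [Fintype α] {m : α} (hm : m ∈ innerPts α) :
    ∃ m0 ∈ innerPts α, Xi m ⊆ Xi m0 ∧ Xi m0 ∈ bundles α := by
  classical
  have hs : ({m' ∈ innerPts α | Xi m ⊆ Xi m'} : Set α).Finite := Set.toFinite _
  obtain ⟨m0, hm0s, hmax⟩ := Set.Finite.exists_maximalFor Xi _ hs ⟨m, hm, subset_rfl⟩
  exact ⟨m0, hm0s.1, hm0s.2,
    ⟨m0, hm0s.1, rfl, fun m' hm' hsub =>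
      Set.Subset.antisymm (hmax ⟨hm', hm0s.2.trans hsub⟩ hsub) hsub⟩⟩

lemma edge_bundle [Fintype α] (hiso : NoIsolated α) {x y : α}
    (hx : x ∈ LSet α) (hy : y ∈ USet α)
    (h : ∃ a2 b2 v2 w2 : α, IsImproperCrownE a2 b2 v2 w2 ∧
        x ∈ ({a2, b2, v2, w2} : Set α) ∧ y ∈ ({a2, b2, v2, w2} : Set α)) :
    ∃ m, Xi m ∈ bundles α ∧ x ≤ m ∧ m ≤ y := by
  obtain ⟨m, hm, hxm, hmy⟩ := edge_inner hx hy h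
  obtain ⟨m0, _, hsub, hbun⟩ := exists_bundle hm
  have hxm0 : x ∈ Xi m0 := hsub (Or.inl ⟨hx, hxm⟩)
  have hym0 : y ∈ Xi m0 := hsub (Or.inr ⟨hy, hmy⟩)
  exact ⟨m0, hbun, le_of_mem_Xi_LSet hiso hx hxm0,
    ge_of_mem_Xi_USet hiso hy hym0⟩

end Aux

theorem stmt12 {α : Type*} [Fintype α] [PartialOrder α]
    (hiso : NoIsolated α) (a b v w : α) (hcrown : IsCrown a b v w)
    (ha : a ∈ ESet α) (hb : b ∈ ESet α) (hv : v ∈ ESet α) (hw : w ∈ ESet α)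
    (hedges : ∀ p ∈ ({(a, v), (a, w), (b, v), (b, w)} : Set (α × α)),
      ∃ a2 b2 v2 w2 : α, IsImproperCrownE a2 b2 v2 w2 ∧
        p.1 ∈ ({a2, b2, v2, w2} : Set α) ∧ p.2 ∈ ({a2, b2, v2, w2} : Set α))
    (hcomplete : ∀ F ∈ bundles α, ∀ G ∈ bundles α,
      (F ∩ G ∩ LSet α).Nonempty ∧ (F ∩ G ∩ USet α).Nonempty) :
    ¬ IsRetract α {a, b, v, w} := by
  obtain ⟨hav, haw, hbv, hbw, hnab, hnba, hnvw, hnwv⟩ := hcrown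
  rintro ⟨r, hmono, hidem, hrange⟩
  -- extremality of the four crown points
  have haL : a ∈ LSet α := ha.resolve_right (notUSet_of_lt hav)
  have hbL : b ∈ LSet α := hb.resolve_right (notUSet_of_lt hbv)
  have hvU : v ∈ USet α := hv.resolve_left (notLSet_of_lt hav)
  have hwU : w ∈ USet α := hw.resolve_left (notLSet_of_lt haw)
  -- the retraction fixes C and maps into C
  have hfix : ∀ c ∈ ({a, b, v, w} : Set α), r c = c := by
    intro c hc
    rw [← hrange] at hc
    obtain ⟨x, rfl⟩ := hc
    exact hidem x
  have hra : r a = a := hfix a (by simp)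
  have hrb : r b = b := hfix b (by simp)
  have hrv : r v = v := hfix v (by simp)
  have hrw : r w = w := hfix w (by simp)
  have hrmem : ∀ x, r x ∈ ({a, b, v, w} : Set α) := fun x =>
    hrange ▸ Set.mem_range_self x
  -- no common lower bound of a,b in C; no common upper bound of v,w in C
  have hnoLow : ∀ c ∈ ({a, b, v, w} : Set α), c ≤ a → c ≤ b → False := by
    intro c hc h1 h2
    rcases hc with rfl | rfl | rfl | rfl
    · exact hnab h2
    · exact hnba h1
    · exact absurd (le_antisymm hav.le h1) hav.ne
    · exact absurd (le_antisymm haw.le h1) haw.ne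
  have hnoHigh : ∀ c ∈ ({a, b, v, w} : Set α), v ≤ c → w ≤ c → False := by
    intro c hc h1 h2
    rcases hc with rfl | rfl | rfl | rfl
    · exact absurd (le_antisymm h1 hav.le) hav.ne'
    · exact absurd (le_antisymm h1 hbv.le) hbv.ne'
    · exact hnwv h2
    · exact hnvw h1
  -- bundle inner points between each edge
  obtain ⟨m1, hF1, ham1, hm1v⟩ :=
    edge_bundle hiso haL hvU (hedges (a, v) (by simp))
  obtain ⟨m2, hF2, ham2, hm2w⟩ :=
    edge_bundle hiso haL hwU (hedges (a, w) (by simp))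
  obtain ⟨m3, hF3, hbm3, hm3v⟩ :=
    edge_bundle hiso hbL hvU (hedges (b, v) (by simp))
  obtain ⟨m4, hF4, hbm4, hm4w⟩ :=
    edge_bundle hiso hbL hwU (hedges (b, w) (by simp))
  -- the retraction values on the inner points
  have hval : ∀ x y m : α, x ∈ ({a, b, v, w} : Set α) → r x = x → r y = y →
      (∀ c ∈ ({a, b, v, w} : Set α), x ≤ c → c ≤ y → c = x ∨ c = y) →
      x ≤ m → m ≤ y → r m = x ∨ r m = y := by
    intro x y m _ hx hy hchar hxm hmy
    exact hchar (r m) (hrmem m) (hx ▸ hmono hxm) (hy ▸ hmono hmy)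
  have h1 : r m1 = a ∨ r m1 = v := by
    have h1a : a ≤ r m1 := hra ▸ hmono ham1
    have h1v : r m1 ≤ v := hrv ▸ hmono hm1v
    rcases hrmem m1 with h | h | h | h
    · exact Or.inl h
    · exact absurd (h ▸ h1a) hnab
    · exact Or.inr h
    · exact absurd (h ▸ h1v) hnwv
  have h2 : r m2 = a ∨ r m2 = w := by
    have h2a : a ≤ r m2 := hra ▸ hmono ham2
    have h2w : r m2 ≤ w := hrw ▸ hmono hm2w
    rcases hrmem m2 with h | h | h | h
    · exact Or.inl h
    · exact absurd (h ▸ h2a) hnab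
    · exact absurd (h ▸ h2w) hnvw
    · exact Or.inr h
  have h3 : r m3 = b ∨ r m3 = v := by
    have h3b : b ≤ r m3 := hrb ▸ hmono hbm3
    have h3v : r m3 ≤ v := hrv ▸ hmono hm3v
    rcases hrmem m3 with h | h | h | h
    · exact absurd (h ▸ h3b) hnba
    · exact Or.inl h
    · exact Or.inr h
    · exact absurd (h ▸ h3v) hnwv
  have h4 : r m4 = b ∨ r m4 = w := by
    have h4b : b ≤ r m4 := hrb ▸ hmono hbm4
    have h4w : r m4 ≤ w := hrw ▸ hmono hm4w
    rcases hrmem m4 with h | h | h | h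
    · exact absurd (h ▸ h4b) hnba
    · exact Or.inl h
    · exact absurd (h ▸ h4w) hnvw
    · exact Or.inr h
  -- pairwise bundle intersections give common bounds in C
  have pairlow : ∀ mi mj : α, Xi mi ∈ bundles α → Xi mj ∈ bundles α →
      (∃ c ∈ ({a, b, v, w} : Set α), c ≤ r mi ∧ c ≤ r mj) ∧
      (∃ c ∈ ({a, b, v, w} : Set α), r mi ≤ c ∧ r mj ≤ c) := by
    intro mi mj hFi hFj
    obtain ⟨⟨l, ⟨⟨hli, hlj⟩, hlL⟩⟩, ⟨u, ⟨⟨hui, huj⟩, huU⟩⟩⟩ :=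
      hcomplete _ hFi _ hFj
    exact ⟨⟨r l, hrmem l, hmono (le_of_mem_Xi_LSet hiso hlL hli),
        hmono (le_of_mem_Xi_LSet hiso hlL hlj)⟩,
      ⟨r u, hrmem u, hmono (ge_of_mem_Xi_USet hiso huU hui),
        hmono (ge_of_mem_Xi_USet hiso huU huj)⟩⟩
  have nab : ∀ mi mj : α, Xi mi ∈ bundles α → Xi mj ∈ bundles α →
      r mi = a → r mj = b → False := by
    intro mi mj hFi hFj ei ej
    obtain ⟨c, hc, hc1, hc2⟩ := (pairlow mi mj hFi hFj).1
    exact hnoLow c hc (ei ▸ hc1) (ej ▸ hc2)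
  have nvw : ∀ mi mj : α, Xi mi ∈ bundles α → Xi mj ∈ bundles α →
      r mi = v → r mj = w → False := by
    intro mi mj hFi hFj ei ej
    obtain ⟨c, hc, hc1, hc2⟩ := (pairlow mi mj hFi hFj).2
    exact hnoHigh c hc (ei ▸ hc1) (ej ▸ hc2)
  -- final case analysis
  rcases h1 with e1 | e1 <;> rcases h2 with e2 | e2 <;>
    rcases h3 with e3 | e3 <;> rcases h4 with e4 | e4
  · exact nab m1 m3 hF1 hF3 e1 e3
  · exact nab m1 m3 hF1 hF3 e1 e3
  · exact nab m2 m4 hF2 hF4 e2 e4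
  · exact nvw m3 m4 hF3 hF4 e3 e4
  · exact nab m1 m3 hF1 hF3 e1 e3
  · exact nab m1 m3 hF1 hF3 e1 e3
  · exact nvw m3 m2 hF3 hF2 e3 e2
  · exact nvw m3 m4 hF3 hF4 e3 e4
  · exact nab m2 m4 hF2 hF4 e2 e4
  · exact nvw m1 m4 hF1 hF4 e1 e4
  · exact nab m2 m4 hF2 hF4 e2 e4
  · exact nvw m3 m4 hF3 hF4 e3 e4
  · exact nvw m1 m2 hF1 hF2 e1 e2
  · exact nvw m1 m2 hF1 hF2 e1 e2
  · exact nvw m1 m2 hF1 hF2 e1 e2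
  · exact nvw m1 m2 hF1 hF2 e1 e2
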